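/- arXiv:math/0405274 — 3 statements merged into one kernel-verified Lean document; each statement's English description precedes it below -/
import Mathlib

section
/- Let X be an infinite connected graph of bounded valence with base point x₀, and let X⁺ be the graph obtained from X by adding one new vertex v connected by an edge to x₀. Then there is a bilipschitz equivalence between X and X⁺; hence for any pointed graph Y, X*Y and X⁺*Y are bilipschitz equivalent. -/
/-! All spaces are vertex sets of connected graphs of bounded valence, with the
path metric (`SimpleGraph.dist`) in which every edge has length 1. -/

/-- `f` is an `L`-bilipschitz equivalence between the path metrics of the
graphs `G` and `H`. -/
def IsBilipEquiv (L : ℝ) {V W : Type*} (G : SimpleGraph V) (H : SimpleGraph W)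
    (f : V → W) : Prop :=
  Function.Bijective f ∧
    ∀ u v : V, (G.dist u v : ℝ) / L ≤ H.dist (f u) (f v) ∧
      (H.dist (f u) (f v) : ℝ) ≤ L * G.dist u v

/-- The graphs `G` and `H` are bilipschitz equivalent. -/
def BilipEquiv {V W : Type*} (G : SimpleGraph V) (H : SimpleGraph W) : Prop :=
  ∃ L > (0 : ℝ), ∃ f : V → W, IsBilipEquiv L G H f

/-- A connected graph of bounded valence. -/
def GoodGraph {V : Type*} (G : SimpleGraph V) : Prop :=
  G.Connected ∧ ∃ D : ℕ, ∀ v : V, (G.neighborSet v).ncard ≤ D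

/-- A graph is homogeneous with constant `L` if any vertex can be carried to
any other vertex by an `L`-bilipschitz self-map. -/
def HomogeneousWith (L : ℝ) {V : Type*} (G : SimpleGraph V) : Prop :=
  ∀ x₁ x₂ : V, ∃ f : V → V, IsBilipEquiv L G G f ∧ f x₁ = x₂

/-- A graph is homogeneous if it is homogeneous with some constant `L > 0`. -/
def Homogeneous {V : Type*} (G : SimpleGraph V) : Prop :=
  ∃ L > (0 : ℝ), HomogeneousWith L G

/-- The letter `a` is a base-point letter. -/
def IsBaseLetter {X Y : Type*} (x₀ : X) (y₀ : Y) : X ⊕ Y → Prop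
  | .inl x => x = x₀
  | .inr y => y = y₀

/-- The vertices of the free product `(X,x₀) * (Y,y₀)` of pointed graphs:
nonempty alternating words starting with an `X`-letter, all of whose interior
letters (neither first nor last) are not base points.  The last letter records
the actual vertex in its copy of `X` or `Y`; the other letters record the
address of this copy in the tree of spaces. -/
def ValidWord {X Y : Type*} (x₀ : X) (y₀ : Y) (w : List (X ⊕ Y)) : Prop :=
  w ≠ [] ∧ (∀ a ∈ w.head?, a.isLeft = true) ∧
    List.Chain' (fun a b => b.isLeft = !a.isLeft) w ∧
    ∀ i : Fin w.length, 0 < (i : ℕ) → (i : ℕ) + 1 < w.length →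
      ¬ IsBaseLetter x₀ y₀ (w.get i)

/-- The vertex set of the free product of pointed graphs. -/
def FPWord {X Y : Type*} (x₀ : X) (y₀ : Y) : Type _ :=
  {w : List (X ⊕ Y) // ValidWord x₀ y₀ w}

/-- The free product `(X,x₀) * (Y,y₀)` of two pointed graphs: the tree of
spaces obtained by alternately attaching copies of `X` and `Y` along base
points, so that every vertex is incident to exactly one edge leaving its copy.
Two words are adjacent iff they lie in a common copy of `X` or `Y` (same
address, adjacent last letters), or one is obtained from the other by
appending a base-point letter (the unique edge leaving a copy). -/
def freeProd {X Y : Type*} (Gx : SimpleGraph X) (Gy : SimpleGraph Y) (x₀ : X) (y₀ : Y) :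
    SimpleGraph (FPWord x₀ y₀) :=
  SimpleGraph.fromRel (fun u v =>
    (∃ (w : List (X ⊕ Y)) (a b : X), Gx.Adj a b ∧
        u.1 = w ++ [Sum.inl a] ∧ v.1 = w ++ [Sum.inl b]) ∨
    (∃ (w : List (X ⊕ Y)) (a b : Y), Gy.Adj a b ∧
        u.1 = w ++ [Sum.inr a] ∧ v.1 = w ++ [Sum.inr b]) ∨
    u.1 = v.1 ++ [Sum.inl x₀] ∨ u.1 = v.1 ++ [Sum.inr y₀])

/-- The base point of the free product: the base point `x₀` of the initial
copy of `X`; it is one endpoint of the base edge. -/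
def basePointX {X Y : Type*} (x₀ : X) (y₀ : Y) : FPWord x₀ y₀ :=
  ⟨[Sum.inl x₀], by
    refine ⟨by simp, by simp, by simp [List.Chain', List.isChain_pair], ?_⟩
    intro i h1 h2
    simp only [List.length_cons, List.length_nil] at h2
    exact absurd h1 (by omega)⟩

/-- The base point `y₀` of the initial copy of `Y` in the free product: the
other endpoint of the base edge. -/
def basePointY {X Y : Type*} (x₀ : X) (y₀ : Y) : FPWord x₀ y₀ :=
  ⟨[Sum.inl x₀, Sum.inr y₀], by
    refine ⟨by simp, by simp, by simp [List.Chain', List.isChain_pair], ?_⟩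
    intro i h1 h2
    simp only [List.length_cons, List.length_nil] at h2
    exact absurd h1 (by omega)⟩

/-- The wedge of two pointed graphs: their disjoint union with an edge added
connecting the two base points. -/
def wedgeGraph {V W : Type*} (G : SimpleGraph V) (H : SimpleGraph W) (v₀ : V) (w₀ : W) :
    SimpleGraph (V ⊕ W) :=
  SimpleGraph.fromRel (fun u v =>
    (∃ a b, G.Adj a b ∧ u = Sum.inl a ∧ v = Sum.inl b) ∨
    (∃ a b, H.Adj a b ∧ u = Sum.inr a ∧ v = Sum.inr b) ∨
    (u = Sum.inl v₀ ∧ v = Sum.inr w₀))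


/-- The graph `X⁺` obtained from a pointed graph `(X, x₀)` by adding one new
vertex (`none`) connected by an edge to the base point `x₀`. -/
def plusGraph {X : Type*} (Gx : SimpleGraph X) (x₀ : X) : SimpleGraph (Option X) :=
  SimpleGraph.fromRel (fun u v =>
    (∃ a b, Gx.Adj a b ∧ u = some a ∧ v = some b) ∨ (u = none ∧ v = some x₀))

lemma dist_le_mul_length {V W : Type*} {G : SimpleGraph V} {H : SimpleGraph W}
    (hH : H.Connected) (f : V → W) (C : ℕ)
    (hedge : ∀ u v : V, G.Adj u v → H.dist (f u) (f v) ≤ C) :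
    ∀ {u v : V} (p : G.Walk u v), H.dist (f u) (f v) ≤ C * p.length := by
  intro u v p
  induction p with
  | nil => simp [SimpleGraph.dist_self]
  | @cons a c b h q ih =>
    calc H.dist (f a) (f b) ≤ H.dist (f a) (f c) + H.dist (f c) (f b) := hH.dist_triangle
    _ ≤ C + C * q.length := add_le_add (hedge _ _ h) ih
    _ = C * (q.length + 1) := by ring
    _ = C * (SimpleGraph.Walk.cons h q).length := by rw [SimpleGraph.Walk.length_cons]

lemma lipschitz_of_edge {V W : Type*} {G : SimpleGraph V} {H : SimpleGraph W}
    (hG : G.Connected) (hH : H.Connected) (f : V → W) (C : ℕ)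
    (hedge : ∀ u v : V, G.Adj u v → H.dist (f u) (f v) ≤ C) (u v : V) :
    H.dist (f u) (f v) ≤ C * G.dist u v := by
  obtain ⟨p, hp⟩ := hG.exists_walk_length_eq_dist u v
  rw [← hp]
  exact dist_le_mul_length hH f C hedge p

lemma adj_dist_le_one {V : Type*} {G : SimpleGraph V} {u v : V} (h : G.Adj u v) :
    G.dist u v ≤ 1 := by
  simpa using SimpleGraph.dist_le h.toWalk

/-- In an infinite connected graph there is an injective sequence avoiding `x₀`
with consecutive distances at most 2, whose consecutive terms are adjacent or
share a neighbor. -/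
lemma exists_quasiray {X : Type*} [Infinite X] {Gx : SimpleGraph X} (hX : Gx.Connected)
    (x₀ : X) :
    ∃ r : ℕ → X, Function.Injective r ∧ (∀ n, Gx.dist (r n) (r (n+1)) ≤ 2) ∧
      ∀ n, r n ≠ x₀ := by
  by_cases hlf : ∀ v : X, (Gx.neighborSet v).Finite
  · -- locally finite: König-style construction of a geodesic ray
    set d : X → ℕ := fun v => Gx.dist x₀ v with hd
    set S : X → Set X := fun v => {w | Gx.dist x₀ w = d v + Gx.dist v w} with hS
    have hstep : ∀ v : X, (S v).Infinite →
        ∃ u : X, Gx.Adj v u ∧ d u = d v + 1 ∧ (S u).Infinite := by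
      intro v hv
      set T : Set X := {u | Gx.Adj v u ∧ d u = d v + 1} with hT
      have hTfin : T.Finite := (hlf v).subset (fun u hu => hu.1)
      by_contra hcon
      push_neg at hcon
      have hsub : S v ⊆ {v} ∪ ⋃ u ∈ T, S u := by
        intro w hw
        by_cases hwv : w = v
        · exact Or.inl hwv
        · right
          have hr : Gx.Reachable v w := hX v w
          have hdpos : Gx.dist v w ≠ 0 := by
            rw [SimpleGraph.dist_ne_zero_iff_ne_and_reachable]
            exact ⟨Ne.symm hwv, hr⟩
          obtain ⟨p, hp⟩ := hr.exists_walk_length_eq_dist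
          cases p with
          | nil => exact absurd rfl hwv
          | @cons _ c _ hadj q =>
            have hq : Gx.dist c w ≤ q.length := SimpleGraph.dist_le q
            rw [SimpleGraph.Walk.length_cons] at hp
            have h1 : Gx.dist v w ≤ 1 + Gx.dist c w := by
              have ht := hX.dist_triangle (u := v) (v := c) (w := w)
              have := adj_dist_le_one hadj; omega
            have hcw : Gx.dist v w = Gx.dist c w + 1 := by omega
            have hwS : Gx.dist x₀ w = d v + Gx.dist v w := hw
            have hdc1 : d c ≤ d v + 1 := by
              have := hX.dist_triangle (u := x₀) (v := v) (w := c)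
              have := adj_dist_le_one hadj
              simp only [hd]; omega
            have hdc2 : d v + 1 ≤ d c := by
              have htri : Gx.dist x₀ w ≤ Gx.dist x₀ c + Gx.dist c w := hX.dist_triangle
              simp only [hd] at *; omega
            have hdc : d c = d v + 1 := le_antisymm hdc1 hdc2
            have hcT : c ∈ T := ⟨hadj, hdc⟩
            have hcS : w ∈ S c := by
              simp only [hS, Set.mem_setOf_eq]; rw [hdc]; omega
            exact Set.mem_biUnion hcT hcS
      have hfin : ({v} ∪ ⋃ u ∈ T, S u : Set X).Finite :=
        (Set.finite_singleton v).union (hTfin.biUnion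
          (fun u hu => hcon u hu.1 hu.2))
      exact hv (hfin.subset hsub)
    have hS0 : (S x₀).Infinite := by
      have : S x₀ = Set.univ := by
        ext w
        simp [hS, hd, SimpleGraph.dist_self]
      rw [this]; exact Set.infinite_univ
    choose! s hadj hsd hsinf using hstep
    set r : ℕ → X := fun n => s^[n] (s x₀) with hr
    have hiter : ∀ n, r (n+1) = s (r n) := by
      intro n; simp [hr, Function.iterate_succ_apply']
    have key : ∀ n, (S (r n)).Infinite ∧ d (r n) = n + 1 := by
      intro n
      induction n with
      | zero =>
        refine ⟨by simpa [hr] using hsinf x₀ hS0, ?_⟩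
        have := hsd x₀ hS0
        have hd0 : d x₀ = 0 := by simp [hd, SimpleGraph.dist_self]
        simpa [hr, hd0] using this
      | succ n ih =>
        rw [hiter]
        exact ⟨hsinf _ ih.1, by rw [hsd _ ih.1, ih.2]⟩
    refine ⟨r, ?_, ?_, ?_⟩
    · intro m n h
      have := (key m).2
      have := (key n).2
      by_contra hne
      have : d (r m) = d (r n) := by rw [h]
      omega
    · intro n
      have hadjn : Gx.Adj (r n) (r (n+1)) := by
        rw [hiter]; exact hadj _ (key n).1
      have := adj_dist_le_one hadjn
      omega
    · intro n h
      have := (key n).2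
      rw [h] at this
      simp [hd, SimpleGraph.dist_self] at this
  · -- some vertex has infinitely many neighbors
    push_neg at hlf
    obtain ⟨v, hv⟩ := hlf
    have hinf : (Gx.neighborSet v \ {x₀}).Infinite :=
      (Set.Infinite.diff hv (Set.finite_singleton x₀))
    let e := hinf.natEmbedding
    refine ⟨fun n => (e n).1, ?_, ?_, ?_⟩
    · intro m n h
      apply e.injective
      exact Subtype.ext h
    · intro n
      have h1 : Gx.Adj v (e n).1 := ((e n).2.1 : _)
      have h2 : Gx.Adj v (e (n+1)).1 := ((e (n+1)).2.1 : _)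
      calc Gx.dist (e n).1 (e (n+1)).1
          ≤ Gx.dist (e n).1 v + Gx.dist v (e (n+1)).1 := hX.dist_triangle
        _ ≤ 1 + 1 := add_le_add (by rw [SimpleGraph.dist_comm]; exact adj_dist_le_one h1)
            (adj_dist_le_one h2)
        _ = 2 := rfl
    · intro n
      exact fun h => (e n).2.2 (by simp [h])
section Shift
variable {X : Type*} (r : ℕ → X)

open Classical in
noncomputable def shiftF : Option X → X
  | none => r 0
  | some x => if h : ∃ n, r n = x then r (Classical.choose h + 1) else x

open Classical in
noncomputable def shiftG (x : X) : Option X :=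
  if h : ∃ n, r n = x then
    (if Classical.choose h = 0 then none else some (r (Classical.choose h - 1)))
  else some x

variable (hr : Function.Injective r)
include hr

lemma choose_eq {n : ℕ} (h : ∃ m, r m = r n) : Classical.choose h = n :=
  hr (Classical.choose_spec h)

omit hr in
lemma shiftF_none : shiftF r none = r 0 := rfl

lemma shiftF_some_r (n : ℕ) : shiftF r (some (r n)) = r (n+1) := by
  have h : ∃ m, r m = r n := ⟨n, rfl⟩
  simp only [shiftF, dif_pos h, choose_eq r hr h]

omit hr in
lemma shiftF_some_not {x : X} (hx : ∀ n, r n ≠ x) : shiftF r (some x) = x := by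
  have h : ¬ ∃ n, r n = x := by push_neg; exact hx
  simp only [shiftF, dif_neg h]

lemma shiftG_r_zero : shiftG r (r 0) = none := by
  have h : ∃ m, r m = r 0 := ⟨0, rfl⟩
  simp only [shiftG, dif_pos h, choose_eq r hr h]
  simp

lemma shiftG_r_succ (n : ℕ) : shiftG r (r (n+1)) = some (r n) := by
  have h : ∃ m, r m = r (n+1) := ⟨n+1, rfl⟩
  simp only [shiftG, dif_pos h, choose_eq r hr h]
  simp

omit hr in
lemma shiftG_not {x : X} (hx : ∀ n, r n ≠ x) : shiftG r x = some x := by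
  have h : ¬ ∃ n, r n = x := by push_neg; exact hx
  simp only [shiftG, dif_neg h]

lemma shift_left_inv : Function.LeftInverse (shiftG r) (shiftF r) := by
  intro o
  match o with
  | none => rw [shiftF_none r, shiftG_r_zero r hr]
  | some x =>
    by_cases h : ∃ n, r n = x
    · obtain ⟨n, rfl⟩ := h
      rw [shiftF_some_r r hr, shiftG_r_succ r hr]
    · push_neg at h
      rw [shiftF_some_not r h, shiftG_not r h]

lemma shift_right_inv : Function.RightInverse (shiftG r) (shiftF r) := by
  intro x
  by_cases h : ∃ n, r n = x
  · obtain ⟨n, rfl⟩ := h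
    match n with
    | 0 => rw [shiftG_r_zero r hr, shiftF_none r]
    | n+1 => rw [shiftG_r_succ r hr, shiftF_some_r r hr]
  · push_neg at h
    rw [shiftG_not r h, shiftF_some_not r h]

lemma shiftF_bijective : Function.Bijective (shiftF r) :=
  ⟨(shift_left_inv r hr).injective, (shift_right_inv r hr).surjective⟩

lemma shiftG_bijective : Function.Bijective (shiftG r) :=
  ⟨(shift_right_inv r hr).injective, (shift_left_inv r hr).surjective⟩

end Shift


section Plus
variable {X : Type*} {Gx : SimpleGraph X} {x₀ : X}

lemma plus_adj_some {a b : X} (h : Gx.Adj a b) :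
    (plusGraph Gx x₀).Adj (some a) (some b) := by
  rw [plusGraph, SimpleGraph.fromRel_adj]
  exact ⟨by simpa using h.ne, Or.inl (Or.inl ⟨a, b, h, rfl, rfl⟩)⟩

lemma plus_adj_none : (plusGraph Gx x₀).Adj none (some x₀) := by
  rw [plusGraph, SimpleGraph.fromRel_adj]
  exact ⟨by simp, Or.inl (Or.inr ⟨rfl, rfl⟩)⟩

/-- Inclusion of `X` into `X⁺` as a graph homomorphism. -/
def plusHom (Gx : SimpleGraph X) (x₀ : X) : Gx →g plusGraph Gx x₀ where
  toFun := some
  map_rel' := fun h => plus_adj_some h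

lemma plus_dist_some_le (hX : Gx.Connected) (a b : X) :
    (plusGraph Gx x₀).dist (some a) (some b) ≤ Gx.dist a b := by
  obtain ⟨p, hp⟩ := hX.exists_walk_length_eq_dist a b
  have := SimpleGraph.dist_le (p.map (plusHom Gx x₀))
  rwa [SimpleGraph.Walk.length_map, hp] at this

lemma plus_connected (hX : Gx.Connected) : (plusGraph Gx x₀).Connected := by
  rw [SimpleGraph.connected_iff]
  refine ⟨?_, ⟨some x₀⟩⟩
  have hsome : ∀ a : X, (plusGraph Gx x₀).Reachable (some a) (some x₀) :=
    fun a => (hX a x₀).map (plusHom Gx x₀)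
  intro u v
  match u, v with
  | none, none => exact SimpleGraph.Reachable.refl _
  | none, some b => exact (plus_adj_none.reachable).trans (hsome b).symm
  | some a, none => exact (hsome a).trans plus_adj_none.reachable.symm
  | some a, some b => exact (hsome a).trans (hsome b).symm

end Plus


section Disp
variable {X : Type*} {Gx : SimpleGraph X} {x₀ : X} {r : ℕ → X}
variable (hX : Gx.Connected) (hr : Function.Injective r)
  (h2 : ∀ n, Gx.dist (r n) (r (n+1)) ≤ 2) (hx0 : ∀ n, r n ≠ x₀)

include hX hr h2

lemma dispF : ∀ a : X, Gx.dist a (shiftF r (some a)) ≤ 2 := by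
  intro a
  by_cases h : ∃ n, r n = a
  · obtain ⟨n, rfl⟩ := h
    rw [shiftF_some_r r hr]
    exact h2 n
  · push_neg at h
    rw [shiftF_some_not r h]
    simp [SimpleGraph.dist_self]

lemma edgeF : ∀ u v : Option X, (plusGraph Gx x₀).Adj u v →
    Gx.dist (shiftF r u) (shiftF r v) ≤ 2 * Gx.dist x₀ (r 0) + 5 := by
  set K := Gx.dist x₀ (r 0) with hK
  have key : ∀ u v : Option X,
      ((∃ a b, Gx.Adj a b ∧ u = some a ∧ v = some b) ∨ (u = none ∧ v = some x₀)) →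
      Gx.dist (shiftF r u) (shiftF r v) ≤ 2 * K + 5 := by
    rintro u v (⟨a, b, hab, rfl, rfl⟩ | ⟨rfl, rfl⟩)
    · have t1 := dispF hX hr h2 a
      have t2 := dispF hX hr h2 b
      have htri : Gx.dist (shiftF r (some a)) (shiftF r (some b)) ≤
          Gx.dist (shiftF r (some a)) a + (Gx.dist a b + Gx.dist b (shiftF r (some b))) :=
        le_trans hX.dist_triangle (by
          exact add_le_add le_rfl hX.dist_triangle)
      have h1 : Gx.dist (shiftF r (some a)) a ≤ 2 := by
        rw [SimpleGraph.dist_comm]; exact t1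
      have hab1 := adj_dist_le_one hab
      omega
    · have t2 := dispF hX hr h2 x₀
      have htri : Gx.dist (shiftF r none) (shiftF r (some x₀)) ≤
          Gx.dist (r 0) x₀ + Gx.dist x₀ (shiftF r (some x₀)) := by
        rw [shiftF_none]
        exact hX.dist_triangle
      have hck : Gx.dist (r 0) x₀ = K := by rw [hK, SimpleGraph.dist_comm]
      omega
  intro u v h
  rw [plusGraph, SimpleGraph.fromRel_adj] at h
  rcases h.2 with h' | h'
  · exact key u v h'
  · rw [SimpleGraph.dist_comm]
    exact key v u h'

include hx0

lemma dispG : ∀ a : X, (plusGraph Gx x₀).dist (shiftG r a) (some a) ≤ Gx.dist x₀ (r 0) + 2 := by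
  intro a
  by_cases h : ∃ n, r n = a
  · obtain ⟨n, rfl⟩ := h
    match n with
    | 0 =>
      rw [shiftG_r_zero r hr]
      calc (plusGraph Gx x₀).dist none (some (r 0))
          ≤ (plusGraph Gx x₀).dist none (some x₀) +
            (plusGraph Gx x₀).dist (some x₀) (some (r 0)) :=
            (plus_connected hX).dist_triangle
        _ ≤ 1 + Gx.dist x₀ (r 0) :=
            add_le_add (adj_dist_le_one plus_adj_none) (plus_dist_some_le hX _ _)
        _ ≤ Gx.dist x₀ (r 0) + 2 := by omega
    | n+1 =>
      rw [shiftG_r_succ r hr]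
      have := le_trans (plus_dist_some_le (x₀ := x₀) hX (r n) (r (n+1))) (h2 n)
      omega
  · push_neg at h
    rw [shiftG_not r h]
    simp [SimpleGraph.dist_self]

lemma edgeG : ∀ a b : X, Gx.Adj a b →
    (plusGraph Gx x₀).dist (shiftG r a) (shiftG r b) ≤ 2 * Gx.dist x₀ (r 0) + 5 := by
  intro a b hab
  have t1 := dispG hX hr h2 hx0 a
  have t2 := dispG hX hr h2 hx0 b
  have hmid : (plusGraph Gx x₀).dist (some a) (some b) ≤ 1 :=
    le_trans (plus_dist_some_le hX a b) (adj_dist_le_one hab)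
  have htri : (plusGraph Gx x₀).dist (shiftG r a) (shiftG r b) ≤
      (plusGraph Gx x₀).dist (shiftG r a) (some a) +
        ((plusGraph Gx x₀).dist (some a) (some b) +
          (plusGraph Gx x₀).dist (some b) (shiftG r b)) :=
    le_trans (plus_connected hX).dist_triangle
      (add_le_add le_rfl (plus_connected hX).dist_triangle)
  have t2' : (plusGraph Gx x₀).dist (some b) (shiftG r b) ≤ Gx.dist x₀ (r 0) + 2 := by
    rw [SimpleGraph.dist_comm]; exact t2
  omega

end Disp

section Words
variable {X Y : Type*} {x₀ : X} {y₀ : Y}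

lemma valid_snoc {w : List (X ⊕ Y)} {a b : X ⊕ Y} (h : ValidWord x₀ y₀ (w ++ [a]))
    (hab : b.isLeft = a.isLeft) : ValidWord x₀ y₀ (w ++ [b]) := by
  obtain ⟨h1, h2, h3, h4⟩ := h
  refine ⟨by simp, ?_, ?_, ?_⟩
  · cases w with
    | nil =>
      intro c hc
      simp only [List.nil_append, List.head?_cons, Option.mem_def, Option.some.injEq] at hc
      subst hc
      rw [hab]
      exact h2 a (by simp)
    | cons d l =>
      intro c hc
      simp only [List.cons_append, List.head?_cons, Option.mem_def, Option.some.injEq] at hc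
      exact hc ▸ h2 d (by simp)
  · rw [List.Chain', List.isChain_append] at h3 ⊢
    refine ⟨h3.1, by simp, ?_⟩
    intro c hc d hd
    simp only [List.head?_cons, Option.mem_def, Option.some.injEq] at hd
    subst hd
    rw [hab]
    exact h3.2.2 c hc a (by simp)
  · intro i hi1 hi2
    simp only [List.length_append, List.length_cons, List.length_nil] at hi2
    have hilt : (i : ℕ) < w.length := by omega
    have hget : (w ++ [b]).get i = w.get ⟨i, hilt⟩ := by
      simp [List.get_eq_getElem, List.getElem_append_left hilt]
    rw [hget]
    have hlen : (i : ℕ) < (w ++ [a]).length := by simp only [List.length_append, List.length_cons, List.length_nil]; omega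
    have := h4 ⟨i, hlen⟩ hi1 (by simp only [List.length_append, List.length_cons, List.length_nil]; omega)
    have hget' : (w ++ [a]).get ⟨i, hlen⟩ = w.get ⟨i, hilt⟩ := by
      simp [List.get_eq_getElem, List.getElem_append_left hilt]
    rwa [hget'] at this

lemma valid_prefix {w : List (X ⊕ Y)} {a : X ⊕ Y} (h : ValidWord x₀ y₀ (w ++ [a]))
    (hw : w ≠ []) : ValidWord x₀ y₀ w := by
  obtain ⟨h1, h2, h3, h4⟩ := h
  refine ⟨hw, ?_, (List.isChain_append.mp h3).1, ?_⟩
  · intro c hc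
    refine h2 c ?_
    cases w with
    | nil => exact absurd rfl hw
    | cons d l => simpa using hc
  · intro i hi1 hi2
    have hilt : (i : ℕ) < w.length := i.isLt
    have hlen : (i : ℕ) < (w ++ [a]).length := by simp only [List.length_append, List.length_cons, List.length_nil]; omega
    have := h4 ⟨i, hlen⟩ hi1 (by simp only [List.length_append, List.length_cons, List.length_nil]; omega)
    have hget' : (w ++ [a]).get ⟨i, hlen⟩ = w.get i := by
      simp [List.get_eq_getElem, List.getElem_append_left hilt]
    rwa [hget'] at this

end Words

section FP
variable {X Y : Type*} {x₀ : X} {y₀ : Y} {Gx : SimpleGraph X} {Gy : SimpleGraph Y}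

lemma fp_adj_snoc_left {u v : FPWord x₀ y₀} {w : List (X ⊕ Y)} {a b : X}
    (hab : Gx.Adj a b) (hu : u.1 = w ++ [Sum.inl a]) (hv : v.1 = w ++ [Sum.inl b]) :
    (freeProd Gx Gy x₀ y₀).Adj u v := by
  rw [freeProd, SimpleGraph.fromRel_adj]
  refine ⟨?_, Or.inl (Or.inl ⟨w, a, b, hab, hu, hv⟩)⟩
  intro h
  rw [h, hv] at hu
  simpa using hab.ne (Sum.inl.inj (List.append_inj_right hu rfl |> List.cons.inj |>.1)).symm

lemma fp_adj_snoc_right {u v : FPWord x₀ y₀} {w : List (X ⊕ Y)} {a b : Y}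
    (hab : Gy.Adj a b) (hu : u.1 = w ++ [Sum.inr a]) (hv : v.1 = w ++ [Sum.inr b]) :
    (freeProd Gx Gy x₀ y₀).Adj u v := by
  rw [freeProd, SimpleGraph.fromRel_adj]
  refine ⟨?_, Or.inl (Or.inr (Or.inl ⟨w, a, b, hab, hu, hv⟩))⟩
  intro h
  rw [h, hv] at hu
  simpa using hab.ne (Sum.inr.inj (List.append_inj_right hu rfl |> List.cons.inj |>.1)).symm

lemma fp_adj_baseX {u v : FPWord x₀ y₀} (hu : u.1 = v.1 ++ [Sum.inl x₀]) :
    (freeProd Gx Gy x₀ y₀).Adj u v := by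
  rw [freeProd, SimpleGraph.fromRel_adj]
  refine ⟨?_, Or.inl (Or.inr (Or.inr (Or.inl hu)))⟩
  intro h
  rw [h] at hu
  have := congrArg List.length hu
  simp at this

lemma fp_adj_baseY {u v : FPWord x₀ y₀} (hu : u.1 = v.1 ++ [Sum.inr y₀]) :
    (freeProd Gx Gy x₀ y₀).Adj u v := by
  rw [freeProd, SimpleGraph.fromRel_adj]
  refine ⟨?_, Or.inl (Or.inr (Or.inr (Or.inr hu)))⟩
  intro h
  rw [h] at hu
  have := congrArg List.length hu
  simp at this

lemma fp_walk_snoc_left {w : List (X ⊕ Y)} :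
    ∀ {a b : X} (p : Gx.Walk a b) (u v : FPWord x₀ y₀),
      u.1 = w ++ [Sum.inl a] → v.1 = w ++ [Sum.inl b] →
      ∃ q : (freeProd Gx Gy x₀ y₀).Walk u v, q.length = p.length := by
  intro a b p
  induction p with
  | nil =>
    intro u v hu hv
    have : u = v := Subtype.ext (hu.trans hv.symm)
    subst this
    exact ⟨SimpleGraph.Walk.nil, rfl⟩
  | @cons a c b h q ih =>
    intro u v hu hv
    have hua : ValidWord x₀ y₀ (w ++ [Sum.inl a]) := by rw [← hu]; exact u.2
    have hm : ValidWord x₀ y₀ (w ++ [Sum.inl c]) := valid_snoc (b := Sum.inl c) hua rfl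
    obtain ⟨q', hq'⟩ := ih ⟨w ++ [Sum.inl c], hm⟩ v rfl hv
    exact ⟨SimpleGraph.Walk.cons (fp_adj_snoc_left h hu rfl) q', congrArg (· + 1) hq'⟩

lemma fp_walk_snoc_right {w : List (X ⊕ Y)} :
    ∀ {a b : Y} (p : Gy.Walk a b) (u v : FPWord x₀ y₀),
      u.1 = w ++ [Sum.inr a] → v.1 = w ++ [Sum.inr b] →
      ∃ q : (freeProd Gx Gy x₀ y₀).Walk u v, q.length = p.length := by
  intro a b p
  induction p with
  | nil =>
    intro u v hu hv
    have : u = v := Subtype.ext (hu.trans hv.symm)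
    subst this
    exact ⟨SimpleGraph.Walk.nil, rfl⟩
  | @cons a c b h q ih =>
    intro u v hu hv
    have hua : ValidWord x₀ y₀ (w ++ [Sum.inr a]) := by rw [← hu]; exact u.2
    have hm : ValidWord x₀ y₀ (w ++ [Sum.inr c]) := valid_snoc (b := Sum.inr c) hua rfl
    obtain ⟨q', hq'⟩ := ih ⟨w ++ [Sum.inr c], hm⟩ v rfl hv
    exact ⟨SimpleGraph.Walk.cons (fp_adj_snoc_right h hu rfl) q', congrArg (· + 1) hq'⟩

lemma fp_dist_snoc_left (hX : Gx.Connected) {w : List (X ⊕ Y)} {a b : X}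
    {u v : FPWord x₀ y₀} (hu : u.1 = w ++ [Sum.inl a]) (hv : v.1 = w ++ [Sum.inl b]) :
    (freeProd Gx Gy x₀ y₀).dist u v ≤ Gx.dist a b := by
  obtain ⟨p, hp⟩ := hX.exists_walk_length_eq_dist a b
  obtain ⟨q, hq⟩ := fp_walk_snoc_left p u v hu hv
  rw [← hp, ← hq]
  exact SimpleGraph.dist_le q

lemma fp_dist_snoc_right (hY : Gy.Connected) {w : List (X ⊕ Y)} {a b : Y}
    {u v : FPWord x₀ y₀} (hu : u.1 = w ++ [Sum.inr a]) (hv : v.1 = w ++ [Sum.inr b]) :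
    (freeProd Gx Gy x₀ y₀).dist u v ≤ Gy.dist a b := by
  obtain ⟨p, hp⟩ := hY.exists_walk_length_eq_dist a b
  obtain ⟨q, hq⟩ := fp_walk_snoc_right p u v hu hv
  rw [← hp, ← hq]
  exact SimpleGraph.dist_le q

lemma fp_connected (hx : Gx.Connected) (hy : Gy.Connected) :
    (freeProd Gx Gy x₀ y₀).Connected := by
  rw [SimpleGraph.connected_iff]
  refine ⟨?_, ⟨basePointX x₀ y₀⟩⟩
  suffices hbase : ∀ u : FPWord x₀ y₀,
      (freeProd Gx Gy x₀ y₀).Reachable u (basePointX x₀ y₀) by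
    intro u v; exact (hbase u).trans (hbase v).symm
  have main : ∀ n (u : FPWord x₀ y₀), u.1.length ≤ n →
      (freeProd Gx Gy x₀ y₀).Reachable u (basePointX x₀ y₀) := by
    intro n
    induction n with
    | zero =>
      intro u h
      exact absurd (List.length_eq_zero_iff.mp (Nat.le_zero.mp h)) u.2.1
    | succ n ih =>
      intro u hlen
      have hne : u.1 ≠ [] := u.2.1
      have hu0 : u.1 = u.1.dropLast ++ [u.1.getLast hne] :=
        (List.dropLast_append_getLast hne).symm
      set w := u.1.dropLast with hwdef
      obtain ⟨c, hc⟩ : ∃ c, u.1.getLast hne = c := ⟨_, rfl⟩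
      have hu : u.1 = w ++ [c] := by rw [hu0, hc]
      by_cases hw : w = []
      · -- single letter: must be an inl
        rw [hw] at hu
        simp only [List.nil_append] at hu
        have hleft : c.isLeft = true := by
          refine u.2.2.1 _ ?_
          rw [hu]; simp
        obtain ⟨a, ha⟩ := Sum.isLeft_iff.mp hleft
        obtain ⟨p⟩ := hx a x₀
        obtain ⟨q, -⟩ := fp_walk_snoc_left (w := ([] : List (X ⊕ Y)))
          (Gy := Gy) p u (basePointX x₀ y₀) (by rw [hu, ha]; simp) (by simp [basePointX])
        exact ⟨q⟩
      · have hwvalid : ValidWord x₀ y₀ w := valid_prefix (hu ▸ u.2) hw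
        have hlen' : w.length ≤ n := by
          have := congrArg List.length hu
          simp only [List.length_append, List.length_cons, List.length_nil] at this
          omega
        have hreach' := ih ⟨w, hwvalid⟩ hlen'
        rcases c with a | b
        · have hmvalid : ValidWord x₀ y₀ (w ++ [Sum.inl x₀]) := by
            have hua : ValidWord x₀ y₀ (w ++ [Sum.inl a]) := by rw [← hu]; exact u.2
            exact valid_snoc (b := Sum.inl x₀) hua rfl
          obtain ⟨p⟩ := hx a x₀
          obtain ⟨q, -⟩ := fp_walk_snoc_left (Gy := Gy) p u ⟨w ++ [Sum.inl x₀], hmvalid⟩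
            hu rfl
          have hadj : (freeProd Gx Gy x₀ y₀).Adj ⟨w ++ [Sum.inl x₀], hmvalid⟩ ⟨w, hwvalid⟩ :=
            fp_adj_baseX rfl
          exact (SimpleGraph.Walk.reachable q).trans (hadj.reachable.trans hreach')
        · have hmvalid : ValidWord x₀ y₀ (w ++ [Sum.inr y₀]) := by
            have hub : ValidWord x₀ y₀ (w ++ [Sum.inr b]) := by rw [← hu]; exact u.2
            exact valid_snoc (b := Sum.inr y₀) hub rfl
          obtain ⟨p⟩ := hy b y₀
          obtain ⟨q, -⟩ := fp_walk_snoc_right (Gx := Gx) p u ⟨w ++ [Sum.inr y₀], hmvalid⟩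
            hu rfl
          have hadj : (freeProd Gx Gy x₀ y₀).Adj ⟨w ++ [Sum.inr y₀], hmvalid⟩ ⟨w, hwvalid⟩ :=
            fp_adj_baseY rfl
          exact (SimpleGraph.Walk.reachable q).trans (hadj.reachable.trans hreach')
  intro u
  exact main u.1.length u le_rfl

end FP


section MapWord
variable {X X' Y : Type*} {x₀ : X} {x₀' : X'} {y₀ : Y}

lemma isBase_map {g : X → X'} (hbase : ∀ a, g a = x₀' ↔ a = x₀) (c : X ⊕ Y) :
    IsBaseLetter x₀' y₀ (Sum.map g id c) ↔ IsBaseLetter x₀ y₀ c := by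
  cases c with
  | inl a => exact hbase a
  | inr b => exact Iff.rfl

lemma valid_map {g : X → X'} (hbase : ∀ a, g a = x₀' ↔ a = x₀) {w : List (X ⊕ Y)}
    (h : ValidWord x₀ y₀ w) : ValidWord x₀' y₀ (w.map (Sum.map g id)) := by
  obtain ⟨h1, h2, h3, h4⟩ := h
  refine ⟨by simpa using h1, ?_, ?_, ?_⟩
  · intro a ha
    rw [List.head?_map] at ha
    obtain ⟨b, hb, rfl⟩ := Option.map_eq_some_iff.mp ha
    rw [Sum.isLeft_map]
    exact h2 b hb
  · rw [List.Chain', List.isChain_map]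
    refine h3.imp ?_
    intro a b hab
    simpa [Sum.isLeft_map] using hab
  · intro i hi1 hi2
    have hlen : (i : ℕ) < w.length := by
      have := i.isLt; simpa [List.length_map] using this
    have hget : (w.map (Sum.map g id)).get i = Sum.map g id (w.get ⟨i, hlen⟩) := by
      simp [List.get_eq_getElem]
    rw [hget, isBase_map hbase]
    refine h4 ⟨i, hlen⟩ hi1 ?_
    simpa [List.length_map] using hi2

/-- Apply a pointed bijection letterwise to free product words. -/
def mapWord (g : X → X') (hbase : ∀ a, g a = x₀' ↔ a = x₀) :
    FPWord x₀ y₀ → FPWord x₀' y₀ :=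
  fun u => ⟨u.1.map (Sum.map g id), valid_map hbase u.2⟩

lemma mapWord_comp {g : X → X'} {g' : X' → X}
    (hbase : ∀ a, g a = x₀' ↔ a = x₀) (hbase' : ∀ a, g' a = x₀ ↔ a = x₀')
    (hgg' : ∀ a, g' (g a) = a) (u : FPWord x₀ y₀) :
    mapWord g' hbase' (mapWord g hbase u) = u := by
  apply Subtype.ext
  show (u.1.map (Sum.map g id)).map (Sum.map g' id) = u.1
  rw [List.map_map]
  have : (Sum.map g' id : X' ⊕ Y → X ⊕ Y) ∘ (Sum.map g id : X ⊕ Y → X' ⊕ Y) = id := by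
    funext c
    cases c with
    | inl a => simp [hgg']
    | inr b => simp
  rw [this, List.map_id]

lemma mapWord_edge {Gx : SimpleGraph X} {Gx' : SimpleGraph X'} {Gy : SimpleGraph Y}
    (hX' : Gx'.Connected) {g : X → X'} (hbase : ∀ a, g a = x₀' ↔ a = x₀)
    (C : ℕ) (hC : 1 ≤ C) (hg : ∀ a b, Gx.Adj a b → Gx'.dist (g a) (g b) ≤ C) :
    ∀ u v : FPWord x₀ y₀, (freeProd Gx Gy x₀ y₀).Adj u v →
      (freeProd Gx' Gy x₀' y₀).dist (mapWord g hbase u) (mapWord g hbase v) ≤ C := by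
  have key : ∀ u v : FPWord x₀ y₀,
      ((∃ (w : List (X ⊕ Y)) (a b : X), Gx.Adj a b ∧
          u.1 = w ++ [Sum.inl a] ∧ v.1 = w ++ [Sum.inl b]) ∨
        (∃ (w : List (X ⊕ Y)) (a b : Y), Gy.Adj a b ∧
          u.1 = w ++ [Sum.inr a] ∧ v.1 = w ++ [Sum.inr b]) ∨
        u.1 = v.1 ++ [Sum.inl x₀] ∨ u.1 = v.1 ++ [Sum.inr y₀]) →
      (freeProd Gx' Gy x₀' y₀).dist (mapWord g hbase u) (mapWord g hbase v) ≤ C := by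
    rintro u v (⟨w, a, b, hab, hu, hv⟩ | ⟨w, a, b, hab, hu, hv⟩ | hu | hu)
    · have hu' : (mapWord g hbase u).1 = w.map (Sum.map g id) ++ [Sum.inl (g a)] := by
        show u.1.map (Sum.map g id) = _
        rw [hu, List.map_append]; rfl
      have hv' : (mapWord g hbase v).1 = w.map (Sum.map g id) ++ [Sum.inl (g b)] := by
        show v.1.map (Sum.map g id) = _
        rw [hv, List.map_append]; rfl
      exact le_trans (fp_dist_snoc_left hX' hu' hv') (hg a b hab)
    · have hu' : (mapWord g hbase u).1 = w.map (Sum.map g id) ++ [Sum.inr a] := by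
        show u.1.map (Sum.map g id) = _
        rw [hu, List.map_append]; rfl
      have hv' : (mapWord g hbase v).1 = w.map (Sum.map g id) ++ [Sum.inr b] := by
        show v.1.map (Sum.map g id) = _
        rw [hv, List.map_append]; rfl
      exact le_trans (adj_dist_le_one (fp_adj_snoc_right hab hu' hv')) hC
    · have hu' : (mapWord g hbase u).1 = (mapWord g hbase v).1 ++ [Sum.inl x₀'] := by
        show u.1.map (Sum.map g id) = v.1.map (Sum.map g id) ++ _
        rw [hu, List.map_append]
        simp [(hbase x₀).mpr rfl]
      exact le_trans (adj_dist_le_one (fp_adj_baseX hu')) hC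
    · have hu' : (mapWord g hbase u).1 = (mapWord g hbase v).1 ++ [Sum.inr y₀] := by
        show u.1.map (Sum.map g id) = v.1.map (Sum.map g id) ++ _
        rw [hu, List.map_append]
        rfl
      exact le_trans (adj_dist_le_one (fp_adj_baseY hu')) hC
  intro u v h
  rw [freeProd, SimpleGraph.fromRel_adj] at h
  rcases h.2 with h' | h'
  · exact key u v h'
  · rw [SimpleGraph.dist_comm]
    exact key v u h'

end MapWord

lemma bilip_of_nat {V W : Type*} {G : SimpleGraph V} {H : SimpleGraph W} (f : V → W)
    (hbij : Function.Bijective f) (C : ℕ) (hC : 0 < C)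
    (h1 : ∀ u v, H.dist (f u) (f v) ≤ C * G.dist u v)
    (h2 : ∀ u v, G.dist u v ≤ C * H.dist (f u) (f v)) : BilipEquiv G H := by
  have hCR : (0 : ℝ) < C := by exact_mod_cast hC
  refine ⟨C, hCR, f, hbij, fun u v => ⟨?_, ?_⟩⟩
  · rw [div_le_iff₀ hCR]
    have h2' : (G.dist u v : ℝ) ≤ (C : ℝ) * H.dist (f u) (f v) := by exact_mod_cast h2 u v
    linarith
  · exact_mod_cast h1 u v

/-- **Lemma (plus).** Let `X` be an infinite connected graph of bounded
valence with base point `x₀`, and let `X⁺` be obtained from `X` by adding one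
vertex joined to `x₀`.  Then `X` and `X⁺` are bilipschitz equivalent; hence
for any pointed graph `Y`, `X * Y` and `X⁺ * Y` are bilipschitz equivalent. -/
theorem plusGraph_bilipEquiv (X : Type) [Infinite X] (Gx : SimpleGraph X)
    (x₀ : X) (hX : GoodGraph Gx) :
    BilipEquiv Gx (plusGraph Gx x₀) ∧
    ∀ (Y : Type) (Gy : SimpleGraph Y) (y₀ : Y), GoodGraph Gy →
      BilipEquiv (freeProd Gx Gy x₀ y₀)
        (freeProd (plusGraph Gx x₀) Gy (some x₀) y₀) := by
  obtain ⟨hXc, -⟩ := hX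
  obtain ⟨r, hr, h2, hx0⟩ := exists_quasiray hXc x₀
  set C : ℕ := 2 * Gx.dist x₀ (r 0) + 5 with hC
  have hC0 : 0 < C := by omega
  have hC1 : 1 ≤ C := by omega
  have hplusconn : (plusGraph Gx x₀).Connected := plus_connected hXc
  have hFglob : ∀ u v : Option X,
      Gx.dist (shiftF r u) (shiftF r v) ≤ C * (plusGraph Gx x₀).dist u v :=
    lipschitz_of_edge hplusconn hXc (shiftF r) C (edgeF hXc hr h2)
  have hGglob : ∀ a b : X,
      (plusGraph Gx x₀).dist (shiftG r a) (shiftG r b) ≤ C * Gx.dist a b :=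
    lipschitz_of_edge hXc hplusconn (shiftG r) C (edgeG hXc hr h2 hx0)
  have hGF : ∀ a : X, shiftF r (shiftG r a) = a := shift_right_inv r hr
  have hFG : ∀ o : Option X, shiftG r (shiftF r o) = o := shift_left_inv r hr
  constructor
  · refine bilip_of_nat (shiftG r) (shiftG_bijective r hr) C hC0 hGglob ?_
    intro u v
    have := hFglob (shiftG r u) (shiftG r v)
    rwa [hGF, hGF] at this
  · intro Y Gy y₀ hY
    obtain ⟨hYc, -⟩ := hY
    have hgbase : ∀ a : X, shiftG r a = some x₀ ↔ a = x₀ := by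
      intro a
      constructor
      · intro h
        exact (shiftG_bijective r hr).1 (h.trans (shiftG_not r hx0).symm)
      · rintro rfl
        exact shiftG_not r hx0
    have hfbase : ∀ o : Option X, shiftF r o = x₀ ↔ o = some x₀ := by
      intro o
      constructor
      · intro h
        exact (shiftF_bijective r hr).1 (by rw [h, shiftF_some_not r hx0])
      · rintro rfl
        exact shiftF_some_not r hx0
    have hFPc : (freeProd Gx Gy x₀ y₀).Connected := fp_connected hXc hYc
    have hFPc' : (freeProd (plusGraph Gx x₀) Gy (some x₀) y₀).Connected :=
      fp_connected hplusconn hYc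
    have hFedge := mapWord_edge (Gy := Gy) (y₀ := y₀) hplusconn hgbase C hC1
      (fun a b hab => by
        calc (plusGraph Gx x₀).dist (shiftG r a) (shiftG r b) ≤ C * Gx.dist a b :=
              hGglob a b
          _ ≤ C * 1 := Nat.mul_le_mul_left _ (adj_dist_le_one hab)
          _ = C := by omega)
    have hF'edge := mapWord_edge (Gy := Gy) (y₀ := y₀) hXc hfbase C hC1
      (fun a b hab => by
        calc Gx.dist (shiftF r a) (shiftF r b) ≤ C * (plusGraph Gx x₀).dist a b :=
              hFglob a b
          _ ≤ C * 1 := Nat.mul_le_mul_left _ (adj_dist_le_one hab)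
          _ = C := by omega)
    have hFlip := lipschitz_of_edge hFPc hFPc' (mapWord (shiftG r) hgbase) C hFedge
    have hF'lip := lipschitz_of_edge hFPc' hFPc (mapWord (shiftF r) hfbase) C hF'edge
    have hinv : ∀ u : FPWord x₀ y₀,
        mapWord (shiftF r) hfbase (mapWord (shiftG r) hgbase u) = u :=
      fun u => mapWord_comp hgbase hfbase hGF u
    have hinv' : ∀ u : FPWord (some x₀) y₀,
        mapWord (shiftG r) hgbase (mapWord (shiftF r) hfbase u) = u :=
      fun u => mapWord_comp hfbase hgbase hFG u
    refine bilip_of_nat (mapWord (shiftG r) hgbase) ?_ C hC0 hFlip ?_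
    · constructor
      · intro u v h
        rw [← hinv u, ← hinv v, h]
      · intro u
        exact ⟨mapWord (shiftF r) hfbase u, hinv' u⟩
    · intro u v
      have := hF'lip (mapWord (shiftG r) hgbase u) (mapWord (shiftG r) hgbase v)
      rwa [hinv, hinv] at this
end

section
/- Let A be a nontrivial finite group and C any group. Then the kernel of the natural retraction A*C → A (which is the identity on A and kills C) is a subgroup of index |A| in A*C isomorphic to the free product of |A| copies of C. -/
open Monoid SemidirectProduct

section Aux

variable (A : Type) [Group A] (C : Type) [Group C]

local notation "N'" => CoprodI (fun _ : A => C)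

/-- The shift homomorphism on the free product of `A` copies of `C`. -/
def shiftHom (a : A) : N' →* N' :=
  CoprodI.lift (fun b => @CoprodI.of A (fun _ : A => C) _ (a * b))

lemma shiftHom_comp (a b : A) :
    (shiftHom A C a).comp (shiftHom A C b) = shiftHom A C (a * b) := by
  apply CoprodI.ext_hom
  intro i
  ext c
  simp [shiftHom, CoprodI.lift_of, mul_assoc]

lemma shiftHom_one : shiftHom A C (1 : A) = MonoidHom.id _ := by
  apply CoprodI.ext_hom; intro i; ext c; simp [shiftHom]

/-- The shift automorphism. -/
def shiftEquiv (a : A) : N' ≃* N' :=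
  { toFun := shiftHom A C a
    invFun := shiftHom A C a⁻¹
    left_inv := fun x => by
      have := shiftHom_comp A C a⁻¹ a
      rw [inv_mul_cancel, shiftHom_one] at this
      exact DFunLike.congr_fun this x
    right_inv := fun x => by
      have := shiftHom_comp A C a a⁻¹
      rw [mul_inv_cancel, shiftHom_one] at this
      exact DFunLike.congr_fun this x
    map_mul' := map_mul _ }

/-- The action of `A` on the free product. -/
def shiftAct : A →* MulAut N' where
  toFun := shiftEquiv A C
  map_one' := by
    ext x
    show shiftHom A C 1 x = x
    rw [shiftHom_one]; rfl
  map_mul' := fun a b => by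
    ext x
    show shiftHom A C (a * b) x = shiftHom A C a (shiftHom A C b x)
    rw [← shiftHom_comp]; rfl

/-- `A ∗ C →* N ⋊ A`. -/
def toSemidirect : Coprod A C →* N' ⋊[shiftAct A C] A :=
  Coprod.lift (inr : A →* _)
    ((inl : N' →* _).comp (@CoprodI.of A (fun _ : A => C) _ (1 : A)))

/-- `N ⋊ A →* A ∗ C`. -/
def ofSemidirect : N' ⋊[shiftAct A C] A →* Coprod A C :=
  SemidirectProduct.lift
    (CoprodI.lift (fun a =>
      ((MulAut.conj (Coprod.inl a : Coprod A C)).toMonoidHom.comp (Coprod.inr : C →* _))))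
    (Coprod.inl)
    (by
      intro g
      apply CoprodI.ext_hom
      intro i
      ext c
      simp [shiftAct, shiftEquiv, shiftHom, CoprodI.lift_of, mul_assoc])

lemma of_to : (ofSemidirect A C).comp (toSemidirect A C) = MonoidHom.id _ := by
  apply Coprod.hom_ext
  · ext a
    simp [toSemidirect, ofSemidirect]
  · ext c
    simp [toSemidirect, ofSemidirect, CoprodI.lift_of]

lemma to_of : (toSemidirect A C).comp (ofSemidirect A C) = MonoidHom.id _ := by
  apply SemidirectProduct.hom_ext
  · apply CoprodI.ext_hom
    intro i
    ext c <;>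
      simp [ofSemidirect, toSemidirect, CoprodI.lift_of] <;>
      simp [shiftAct, shiftEquiv, shiftHom]
  · ext a <;> simp [ofSemidirect, toSemidirect]

/-- The isomorphism. -/
def coprodEquivSemidirect : Coprod A C ≃* N' ⋊[shiftAct A C] A :=
  { toFun := toSemidirect A C
    invFun := ofSemidirect A C
    left_inv := fun x => DFunLike.congr_fun (of_to A C) x
    right_inv := fun x => DFunLike.congr_fun (to_of A C) x
    map_mul' := map_mul _ }

end Aux

/-- **Lemma.** Let `A` be a nontrivial finite group and `C` any group.  Then
the kernel of the natural retraction `A * C → A` (the identity on `A`,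
trivial on `C`) is a subgroup of index `|A|` in `A * C` isomorphic to the
free product of `|A|` copies of `C`. -/
theorem ker_retraction_coprod (A : Type) [Group A] [Finite A] [Nontrivial A]
    (C : Type) [Group C] :
    (Monoid.Coprod.lift (MonoidHom.id A) (1 : C →* A)).ker.index = Nat.card A ∧
    Nonempty ((Monoid.Coprod.lift (MonoidHom.id A) (1 : C →* A)).ker ≃*
      Monoid.CoprodI (fun _ : A => C)) := by
  set π := Monoid.Coprod.lift (MonoidHom.id A) (1 : C →* A) with hπ
  have hsurj : Function.Surjective π := fun a => ⟨Coprod.inl a, by simp [hπ]⟩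
  constructor
  · rw [Subgroup.index_ker, MonoidHom.range_eq_top.mpr hsurj]
    exact Nat.card_congr Subgroup.topEquiv.toEquiv
  · have hcomp : π = (rightHom : (CoprodI (fun _ : A => C)) ⋊[shiftAct A C] A →* A).comp
        ((coprodEquivSemidirect A C : Coprod A C →* _)) := by
      apply Coprod.hom_ext
      · ext a
        simp [hπ, coprodEquivSemidirect, toSemidirect]
      · ext c
        simp [hπ, coprodEquivSemidirect, toSemidirect]
    have hker : π.ker.map (coprodEquivSemidirect A C : Coprod A C →* _)
        = (rightHom : (CoprodI (fun _ : A => C)) ⋊[shiftAct A C] A →* A).ker := by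
      rw [hcomp, ← MonoidHom.comap_ker]
      exact Subgroup.map_comap_eq_self_of_surjective
        (coprodEquivSemidirect A C).surjective _
    refine ⟨((coprodEquivSemidirect A C).subgroupMap π.ker).trans ?_⟩
    rw [hker, ← range_inl_eq_ker_rightHom]
    exact (MonoidHom.ofInjective inl_injective).symm
end

section
/- Let A be a group and let F₁ and F₂ be finite subgroups of A of the same order. Then there exists a subset X of A which is simultaneously a set of left coset representatives for F₁ and for F₂; that is, X contains exactly one element from each left coset of F₁ and exactly one element from each left coset of F₂. -/
open scoped Pointwise

open Set Function

/-- Schröder–Bernstein preserving a relation: given injections `f` and `g`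
along a relation `r`, there is a bijection along `r`. -/
theorem sb_rel {ι α : Type} (r : ι → α → Prop) (f : ι → α) (g : α → ι)
    (hf : Function.Injective f) (hg : Function.Injective g)
    (hrf : ∀ i, r i (f i)) (hrg : ∀ a, r (g a) a) :
    ∃ h : ι → α, Function.Bijective h ∧ ∀ i, r i (h i) := by
  classical
  cases' isEmpty_or_nonempty α with hα hα
  · have : IsEmpty ι := Function.isEmpty f
    exact ⟨f, ⟨fun a b => by exact (IsEmpty.elim ‹IsEmpty ι› a),
      fun a => (IsEmpty.elim hα a)⟩, fun i => (IsEmpty.elim ‹IsEmpty ι› i)⟩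
  set F : Set ι →o Set ι :=
    { toFun := fun s => (g '' (f '' s)ᶜ)ᶜ
      monotone' := fun s t hst =>
        compl_subset_compl.mpr <| image_mono <| compl_subset_compl.mpr <| image_mono hst }
  set s : Set ι := F.lfp
  have hs : (g '' (f '' s)ᶜ)ᶜ = s := F.map_lfp
  have hns : g '' (f '' s)ᶜ = sᶜ := compl_injective (by simp [hs])
  set g' := invFun g
  have g'g : LeftInverse g' g := leftInverse_invFun hg
  have hg'ns : g' '' sᶜ = (f '' s)ᶜ := by rw [← hns, g'g.image_image]
  set h : ι → α := s.piecewise f g'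
  have hsurj : Surjective h := by rw [← range_eq_univ, range_piecewise, hg'ns, union_compl_self]
  have hinj : Injective h := by
    refine (injective_piecewise_iff _).2 ⟨hf.injOn, ?_, ?_⟩
    · intro x hx y hy hxy
      obtain ⟨x', _, rfl⟩ : x ∈ g '' (f '' s)ᶜ := by rwa [hns]
      obtain ⟨y', _, rfl⟩ : y ∈ g '' (f '' s)ᶜ := by rwa [hns]
      rw [g'g _, g'g _] at hxy
      rw [hxy]
    · intro x hx y hy hxy
      obtain ⟨y', hy', rfl⟩ : y ∈ g '' (f '' s)ᶜ := by rwa [hns]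
      rw [g'g _] at hxy
      exact hy' ⟨x, hx, hxy⟩
  refine ⟨h, ⟨hinj, hsurj⟩, fun i => ?_⟩
  by_cases his : i ∈ s
  · simpa [h, Set.piecewise_eq_of_mem _ _ _ his] using hrf i
  · obtain ⟨a, _, rfl⟩ : i ∈ g '' (f '' s)ᶜ := by rwa [hns]
    have : h (g a) = a := by
      simp only [h, Set.piecewise_eq_of_notMem _ _ _ his]
      exact g'g a
    rw [this]
    exact hrg a

/-- Counting lemma: the preimage in `A` of a finite set of cosets has
`card * |F|` elements. -/
theorem ncard_preimage_mk {A : Type} [Group A] (F : Subgroup A) [Finite F]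
    (u : Finset (A ⧸ F)) :
    ((QuotientGroup.mk ⁻¹' (↑u : Set (A ⧸ F))) : Set A).ncard = u.card * Nat.card F := by
  have e := QuotientGroup.preimageMkEquivSubgroupProdSet F (↑u : Set (A ⧸ F))
  rw [← Nat.card_coe_set_eq, Nat.card_congr e, Nat.card_prod, Nat.card_coe_set_eq,
    Set.ncard_coe_finset, Nat.mul_comm]

theorem preimage_mk_finite {A : Type} [Group A] (F : Subgroup A) [Finite F]
    (u : Finset (A ⧸ F)) :
    ((QuotientGroup.mk ⁻¹' (↑u : Set (A ⧸ F))) : Set A).Finite := by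
  have e := QuotientGroup.preimageMkEquivSubgroupProdSet F (↑u : Set (A ⧸ F))
  rw [← Set.finite_coe_iff]
  have : Finite (F × (↑u : Set (A ⧸ F))) := by
    have : Finite (↑u : Set (A ⧸ F)) := u.finite_toSet
    infer_instance
  exact Finite.of_equiv _ e.symm

/-- From Hall's theorem: an injection from `A ⧸ F₁` to `A ⧸ F₂` matching
intersecting cosets. -/
theorem exists_injective_cosets {A : Type} [Group A] (F₁ F₂ : Subgroup A)
    [Finite F₁] [Finite F₂] (hcard : Nat.card F₁ = Nat.card F₂) :
    ∃ f : A ⧸ F₁ → A ⧸ F₂, Function.Injective f ∧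
      ∀ C, ∃ a : A, (a : A ⧸ F₁) = C ∧ (a : A ⧸ F₂) = f C := by
  classical
  set q₁ : A → A ⧸ F₁ := QuotientGroup.mk
  set q₂ : A → A ⧸ F₂ := QuotientGroup.mk
  have hfib : ∀ C : A ⧸ F₁, (q₂ '' (q₁ ⁻¹' {C})).Finite := by
    intro C
    have : (q₁ ⁻¹' ({C} : Set (A ⧸ F₁))).Finite := by
      simpa using preimage_mk_finite F₁ {C}
    exact this.image _
  set t : A ⧸ F₁ → Finset (A ⧸ F₂) := fun C => (hfib C).toFinset
  have hmemt : ∀ a : A, q₂ a ∈ t (q₁ a) := by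
    intro a
    simp only [t, Set.Finite.mem_toFinset]
    exact ⟨a, rfl, rfl⟩
  have npos : 0 < Nat.card F₁ := Nat.card_pos
  have hall : ∀ s : Finset (A ⧸ F₁), s.card ≤ (s.biUnion t).card := by
    intro s
    have hsub : (q₁ ⁻¹' (↑s : Set (A ⧸ F₁))) ⊆ q₂ ⁻¹' (↑(s.biUnion t) : Set (A ⧸ F₂)) := by
      intro a ha
      simp only [Set.mem_preimage, Finset.coe_biUnion, Set.mem_iUnion, Finset.mem_coe] at *
      exact ⟨q₁ a, ha, hmemt a⟩
    have h1 := ncard_preimage_mk F₁ s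
    have h2 := ncard_preimage_mk F₂ (s.biUnion t)
    have hle := Set.ncard_le_ncard hsub (preimage_mk_finite F₂ (s.biUnion t))
    rw [h1, h2, ← hcard] at hle
    exact Nat.le_of_mul_le_mul_right hle npos
  obtain ⟨f, hfinj, hft⟩ := (Finset.all_card_le_biUnion_card_iff_exists_injective t).mp hall
  refine ⟨f, hfinj, fun C => ?_⟩
  have := hft C
  simp only [t, Set.Finite.mem_toFinset] at this
  obtain ⟨a, ha1, ha2⟩ := this
  exact ⟨a, ha1, ha2⟩

/-- **Lemma (Hall).** Let `A` be a group and `F₁`, `F₂` finite subgroups of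
`A` of the same order.  Then there is a subset `X` of `A` which is
simultaneously a set of left coset representatives for `F₁` and for `F₂`:
`X` meets every left coset of `F₁` and every left coset of `F₂` in exactly
one point. -/
theorem exists_common_transversal (A : Type) [Group A] (F₁ F₂ : Subgroup A)
    [Finite F₁] [Finite F₂] (hcard : Nat.card F₁ = Nat.card F₂) :
    ∃ X : Set A,
      (∀ a : A, ∃! x, x ∈ X ∧ x ∈ a • (F₁ : Set A)) ∧
      (∀ a : A, ∃! x, x ∈ X ∧ x ∈ a • (F₂ : Set A)) := by
  classical
  obtain ⟨f, hfinj, hf⟩ := exists_injective_cosets F₁ F₂ hcard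
  obtain ⟨g, hginj, hg⟩ := exists_injective_cosets F₂ F₁ hcard.symm
  set r : A ⧸ F₁ → A ⧸ F₂ → Prop :=
    fun C D => ∃ a : A, (a : A ⧸ F₁) = C ∧ (a : A ⧸ F₂) = D
  obtain ⟨h, hbij, hr⟩ := sb_rel r f g hfinj hginj
    (fun C => hf C) (fun D => by obtain ⟨a, h1, h2⟩ := hg D; exact ⟨a, h2, h1⟩)
  choose x hx1 hx2 using hr
  have hmem₁ : ∀ (a b : A), b ∈ a • (F₁ : Set A) ↔ (b : A ⧸ F₁) = (a : A ⧸ F₁) := by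
    intro a b
    rw [mem_leftCoset_iff, eq_comm, QuotientGroup.eq]
    exact Iff.rfl
  have hmem₂ : ∀ (a b : A), b ∈ a • (F₂ : Set A) ↔ (b : A ⧸ F₂) = (a : A ⧸ F₂) := by
    intro a b
    rw [mem_leftCoset_iff, eq_comm, QuotientGroup.eq]
    exact Iff.rfl
  refine ⟨Set.range x, fun a => ?_, fun a => ?_⟩
  · refine ⟨x (a : A ⧸ F₁), ⟨⟨_, rfl⟩, (hmem₁ a _).mpr (hx1 _)⟩, ?_⟩
    rintro y ⟨⟨C, rfl⟩, hy⟩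
    rw [hmem₁ a _, hx1 C] at hy
    rw [hy]
  · obtain ⟨C, hC⟩ := hbij.2 (a : A ⧸ F₂)
    refine ⟨x C, ⟨⟨_, rfl⟩, (hmem₂ a _).mpr (by rw [hx2 C, hC])⟩, ?_⟩
    rintro y ⟨⟨C', rfl⟩, hy⟩
    rw [hmem₂ a _, hx2 C'] at hy
    have : C' = C := hbij.1 (by rw [hy, hC])
    rw [this]
end
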